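/- Let L ⊆ S* be a normal form of G and let u ∈ S* be a nonempty word with π(u) = e. Then the normal form L' = { u^{|w|²}·w : w ∈ L } is not quasiregular: there is no constant c ≥ 0 such that every prefix v of a word of L' admits a word x ∈ S* with |x| ≤ c and vx ∈ L'. -/

import Mathlib

/-- The alphabet `S = A ∪ A⁻¹` for a generating tuple of `m` elements:
a letter is a generator index together with a sign (`true` = the generator,
`false` = its inverse). -/
abbrev Letter (m : ℕ) := Fin m × Bool

/-- Evaluation of a letter in the group. -/
def evalLetter {G : Type*} [Group G] {m : ℕ} (A : Fin m → G) (l : Letter m) : G :=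
  if l.2 then A l.1 else (A l.1)⁻¹

/-- The canonical projection `π : S* → G`. -/
def wordEval {G : Type*} [Group G] {m : ℕ} (A : Fin m → G) (w : List (Letter m)) : G :=
  (w.map (evalLetter A)).prod

/-- The word metric `d_A` on `G` relative to `A`. -/
noncomputable def wordDist {G : Type*} [Group G] {m : ℕ} (A : Fin m → G) (g h : G) : ℕ :=
  sInf {n | ∃ w : List (Letter m), wordEval A w = g⁻¹ * h ∧ w.length = n}

/-- `L ⊆ S*` is a normal form of `G`: `π` restricted to `L` is a bijection onto `G`. -/
def IsNormalForm {G : Type*} [Group G] {m : ℕ} (A : Fin m → G)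
    (L : Set (List (Letter m))) : Prop :=
  ∀ g : G, ∃! w, w ∈ L ∧ wordEval A w = g

/-- The fellow-traveler function `s(n)` of a normal form `L`. -/
noncomputable def ftFun {G : Type*} [Group G] {m : ℕ} (A : Fin m → G)
    (L : Set (List (Letter m))) (n : ℕ) : ℕ :=
  sSup {d | ∃ t ≤ n, ∃ w₁ ∈ L, ∃ w₂ ∈ L, ∃ i : Fin m,
    wordEval A w₁ * A i = wordEval A w₂ ∧
    d = wordDist A (wordEval A (w₁.take t)) (wordEval A (w₂.take t))}

/-- `h ⪯ f` : there are positive integers `K, M` and `N₀ ≥ 0` with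
`h n ≤ K * f (M * n)` for all `n ≥ N₀`. -/
def FPreceq (h f : ℕ → ℝ) : Prop :=
  ∃ K M N₀ : ℕ, 0 < K ∧ 0 < M ∧ ∀ n ≥ N₀, h n ≤ (K : ℝ) * f (M * n)

/-- `h ≪ f` : there is an unbounded nondecreasing nonnegative function `t`
with `h·t ⪯ f`. -/
def FLl (h f : ℕ → ℝ) : Prop :=
  ∃ t : ℕ → ℝ, Monotone t ∧ (∀ n, 0 ≤ t n) ∧ (∀ C : ℝ, ∃ n, C < t n) ∧
    FPreceq (fun n => h n * t n) f

/-- A normal form is quasigeodesic if `|w| ≤ C (d_A(π(w)) + 1)` for all `w ∈ L`. -/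
def Quasigeodesic {G : Type*} [Group G] {m : ℕ} (A : Fin m → G)
    (L : Set (List (Letter m))) : Prop :=
  ∃ C : ℝ, 0 < C ∧ ∀ w ∈ L, (w.length : ℝ) ≤ C * ((wordDist A 1 (wordEval A w) : ℝ) + 1)

/-- A normal form is quasiregular with constant `c` if every prefix of a word of `L`
can be extended by a word of length at most `c` to a word of `L`. -/
def Quasiregular {m : ℕ} (L : Set (List (Letter m))) (c : ℕ) : Prop :=
  ∀ w ∈ L, ∀ u : List (Letter m), u <+: w → ∃ x : List (Letter m), x.length ≤ c ∧ u ++ x ∈ L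

/-- A normal form is quasiprefix-closed with constant `C`. -/
def QuasiPrefixClosed {m : ℕ} (L : Set (List (Letter m))) (C : ℕ) : Prop :=
  ∀ u v : List (Letter m), u ++ v ∈ L →
    ∃ x : List (Letter m), x <+: v ∧ x.length ≤ C ∧ u ++ x ∈ L

/-- A language is prefix-closed. -/
def PrefixClosed {m : ℕ} (L : Set (List (Letter m))) : Prop :=
  ∀ w ∈ L, ∀ u : List (Letter m), u <+: w → u ∈ L


/-- Let `L ⊆ S*` be a normal form of `G` and `u` a nonempty word with `π(u) = e`.
Then the normal form `L' = { u^{|w|²}·w : w ∈ L }` is not quasiregular: there is no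
constant `c ≥ 0` such that every prefix `v` of a word of `L'` admits a word `x` with
`|x| ≤ c` and `v ++ x ∈ L'`. -/
theorem firstWay_not_quasiregular {G : Type*} [Group G] [Infinite G] {m : ℕ}
    (A : Fin m → G) (L : Set (List (Letter m))) (hL : IsNormalForm A L)
    (u : List (Letter m)) (hu : u ≠ []) (hue : wordEval A u = 1) :
    ¬ ∃ c : ℕ,
      Quasiregular {w' | ∃ w ∈ L, w' = (List.replicate (w.length ^ 2) u).flatten ++ w} c := by
  rintro ⟨c, hqr⟩
  set p := u.length with hp
  have hp1 : 1 ≤ p := List.length_pos_iff.mpr hu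
  -- find w ∈ L with length > c
  obtain ⟨w, hw, hwlen⟩ : ∃ w ∈ L, c < w.length := by
    by_contra h
    push_neg at h
    have hLfin : L.Finite :=
      (List.finite_length_le (α := Letter m) c).subset (fun w hw => (h w hw))
    have hsurj : Set.univ ⊆ wordEval A '' L := by
      intro g _
      obtain ⟨x, ⟨hx, hxe⟩, _⟩ := hL g
      exact ⟨x, hx, hxe⟩
    exact Set.infinite_univ ((hLfin.image (wordEval A)).subset hsurj)
  set n := w.length with hn
  have hmem : (List.replicate (n ^ 2) u).flatten ++ w ∈
      {w' | ∃ w ∈ L, w' = (List.replicate (w.length ^ 2) u).flatten ++ w} := ⟨w, hw, rfl⟩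
  obtain ⟨x, hxlen, w₂, hw₂, heq⟩ := hqr _ hmem _ (List.prefix_append _ _)
  -- length computation
  have hflat : ∀ N : ℕ, ((List.replicate N u).flatten).length = N * p := by
    intro N
    simp [List.length_flatten, List.map_replicate, List.sum_replicate, smul_eq_mul,
      Nat.mul_comm]
    exact Or.inl rfl
  have hlen := congrArg List.length heq
  set k := w₂.length with hk
  simp only [List.length_append, hflat] at hlen
  -- hlen : n^2 * p + x.length = k^2 * p + k
  rcases Nat.lt_or_ge k n with hkn | hkn
  · have h1 : (k + 1) ^ 2 * p ≤ n ^ 2 * p :=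
      Nat.mul_le_mul_right p (Nat.pow_le_pow_left hkn 2)
    have h2 : k ^ 2 * p + (2 * k + 1) * p ≤ n ^ 2 * p := by
      calc k ^ 2 * p + (2 * k + 1) * p = (k + 1) ^ 2 * p := by ring
        _ ≤ n ^ 2 * p := h1
    have h3 : k + 1 ≤ (2 * k + 1) * p := by
      calc k + 1 ≤ 2 * k + 1 := by omega
        _ = (2 * k + 1) * 1 := by ring
        _ ≤ (2 * k + 1) * p := Nat.mul_le_mul_left _ hp1
    omega
  · have h1 : n ^ 2 * p ≤ k ^ 2 * p :=
      Nat.mul_le_mul_right p (Nat.pow_le_pow_left hkn 2)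
    omega
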